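/- arXiv:2605.00089 — 5 statements merged into one kernel-verified Lean document; each statement's English description precedes it below -/
import Mathlib

section
/- For real constants $r_s > 0$, $\alpha > 0$, $\ell \neq 0$, $D \geq 4$, the effective potential $V(r) = \frac{\ell^2}{2r^2}\left(1-\frac{r_s^{D-3}}{r^{D-3}}\right)\frac{1 + c_1 \alpha r_s^{D-3}/r^{D-1}}{1 - c_2 \alpha r_s^{D-3}/r^{D-1}}$ with $c_2 = 4(D-3)(D-2) > 0$ diverges to $+\infty$ as $r$ decreases to $r_* = (c_2\,\alpha\, r_s^{D-3})^{1/(D-1)}$ from above, provided $r_* > r_s$. -/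
open Real Filter Set

theorem effective_potential_diverges_at_rstar
    (D : ℕ) (hD : 4 ≤ D) (rs α ℓ : ℝ) (hrs : 0 < rs) (hα : 0 < α) (hℓ : ℓ ≠ 0)
    (c₁ c₂ : ℝ) (hc₁ : c₁ = 4 * (D - 3)) (hc₂ : c₂ = 4 * (D - 3) * (D - 2))
    (rstar : ℝ) (hrstar : rstar = (c₂ * α * rs ^ (D - 3)) ^ ((1 : ℝ) / (D - 1)))
    (hsmall : rstar > rs)
    (V : ℝ → ℝ)
    (hV : ∀ r : ℝ, V r = ℓ ^ 2 / (2 * r ^ 2) * (1 - rs ^ (D - 3) / r ^ (D - 3)) *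
        ((1 + c₁ * α * rs ^ (D - 3) / r ^ (D - 1)) /
          (1 - c₂ * α * rs ^ (D - 3) / r ^ (D - 1)))) :
    Tendsto V (nhdsWithin rstar (Ioi rstar)) atTop := by
  have hD4 : (4 : ℝ) ≤ (D : ℝ) := by exact_mod_cast hD
  have hc₂pos : 0 < c₂ := by rw [hc₂]; nlinarith
  have hc₁nn : 0 ≤ c₁ := by rw [hc₁]; nlinarith
  set K : ℝ := c₂ * α * rs ^ (D - 3) with hKdef
  have hKpos : 0 < K := by positivity
  have hrstar_pos : 0 < rstar := lt_trans hrs hsmall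
  have hDcast : ((D - 1 : ℕ) : ℝ) = (D : ℝ) - 1 := by
    have : 1 ≤ D := by omega
    push_cast [Nat.cast_sub this]; ring
  have hK : rstar ^ (D - 1) = K := by
    rw [hrstar, ← Real.rpow_natCast (K ^ ((1 : ℝ) / (D - 1))) (D - 1),
      ← Real.rpow_mul hKpos.le, hDcast, one_div,
      inv_mul_cancel₀ (by nlinarith : (D : ℝ) - 1 ≠ 0), Real.rpow_one]
  -- numerator function
  set N : ℝ → ℝ := fun r => ℓ ^ 2 / (2 * r ^ 2) * (1 - rs ^ (D - 3) / r ^ (D - 3)) *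
      (1 + c₁ * α * rs ^ (D - 3) / r ^ (D - 1)) with hNdef
  have hne2 : (2 * rstar ^ 2 : ℝ) ≠ 0 := by positivity
  have hne3 : (rstar ^ (D - 3) : ℝ) ≠ 0 := by positivity
  have hne1 : (rstar ^ (D - 1) : ℝ) ≠ 0 := by positivity
  have hcont : ContinuousAt N rstar := by
    apply ContinuousAt.mul
    apply ContinuousAt.mul
    · exact ContinuousAt.div continuousAt_const (by fun_prop) hne2
    · exact ContinuousAt.sub continuousAt_const
        (ContinuousAt.div continuousAt_const (by fun_prop) hne3)
    · exact continuousAt_const.add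
        (ContinuousAt.div continuousAt_const (by fun_prop) hne1)
  have hLpos : 0 < N rstar := by
    have h1 : 0 < ℓ ^ 2 / (2 * rstar ^ 2) := by positivity
    have h2 : 0 < 1 - rs ^ (D - 3) / rstar ^ (D - 3) := by
      have : rs ^ (D - 3) < rstar ^ (D - 3) :=
        pow_lt_pow_left₀ hsmall hrs.le (by omega)
      have hpos : (0:ℝ) < rstar ^ (D - 3) := by positivity
      rw [sub_pos, div_lt_one hpos]; exact this
    have h3 : 0 < 1 + c₁ * α * rs ^ (D - 3) / rstar ^ (D - 1) := by
      have : 0 ≤ c₁ * α * rs ^ (D - 3) / rstar ^ (D - 1) := by positivity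
      linarith
    exact mul_pos (mul_pos h1 h2) h3
  have hNt : Tendsto N (nhdsWithin rstar (Ioi rstar)) (nhds (N rstar)) :=
    hcont.continuousWithinAt.tendsto
  -- denominator tends to 0 from above
  have hden0 : Tendsto (fun r => 1 - K / r ^ (D - 1)) (nhdsWithin rstar (Ioi rstar))
      (nhdsWithin 0 (Ioi 0)) := by
    apply tendsto_nhdsWithin_of_tendsto_nhds_of_eventually_within
    · have : ContinuousAt (fun r => 1 - K / r ^ (D - 1)) rstar :=
        continuousAt_const.sub (ContinuousAt.div continuousAt_const (by fun_prop) hne1)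
      have h0 : (1 : ℝ) - K / rstar ^ (D - 1) = 0 := by
        rw [hK, div_self hKpos.ne']; ring
      have := this.tendsto.mono_left (nhdsWithin_le_nhds (s := Ioi rstar))
      rwa [h0] at this
    · filter_upwards [self_mem_nhdsWithin] with r hr
      have hrpos : 0 < r := lt_trans hrstar_pos hr
      have hlt : K < r ^ (D - 1) := by
        rw [← hK]; exact pow_lt_pow_left₀ hr hrstar_pos.le (by omega)
      have : K / r ^ (D - 1) < 1 := by
        rw [div_lt_one (by positivity)]; exact hlt
      simpa [mem_Ioi, sub_pos] using this
  have hinv : Tendsto (fun r => (1 - K / r ^ (D - 1))⁻¹)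
      (nhdsWithin rstar (Ioi rstar)) atTop :=
    tendsto_inv_nhdsGT_zero.comp hden0
  have := Filter.Tendsto.pos_mul_atTop hLpos hNt hinv
  refine this.congr fun r => ?_
  rw [hV, hNdef]
  simp only []
  field_simp
end

section
/- For every integer $D > 4$, the improper integral $\int_0^1 \frac{2 z^{D-5} - 3 z^{D-3} + 1}{(1-z^2)^{3/2}}\,dz$ converges and equals $\sqrt{\pi}\,\frac{(D-1)(D-3)}{2(D-4)}\cdot\frac{\Gamma(D/2)}{\Gamma((D+1)/2)}$. -/
open Real MeasureTheory Set

lemma dom_int : IntegrableOn (fun z : ℝ => (1 - z) ^ (-(1:ℝ)/2)) (Ioo 0 1) volume := by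
  have h : IntervalIntegrable (fun x : ℝ => x ^ (-(1:ℝ)/2)) volume 0 1 :=
    intervalIntegral.intervalIntegrable_rpow' (by norm_num)
  have h2 := (h.comp_sub_left 1).symm
  simp only [sub_zero, sub_self] at h2
  have h4 : IntegrableOn (fun x : ℝ => (1 - x) ^ (-(1:ℝ)/2)) (Ioc 0 1) volume :=
    (intervalIntegrable_iff_integrableOn_Ioc_of_le (by norm_num)).1 h2
  exact h4.mono_set Ioo_subset_Ioc_self

lemma ftc01 (F f : ℝ → ℝ) (hF : ContinuousOn F (Icc 0 1))
    (hd : ∀ x ∈ Ioo (0:ℝ) 1, HasDerivAt F (f x) x)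
    (hi : IntegrableOn f (Ioo 0 1) volume) :
    ∫ z in Ioo (0:ℝ) 1, f z = F 1 - F 0 := by
  have hIoc : IntegrableOn f (Ioc 0 1) volume := hi.congr_set_ae Ioo_ae_eq_Ioc.symm
  have := intervalIntegral.integral_eq_sub_of_hasDeriv_right_of_le (by norm_num : (0:ℝ) ≤ 1)
    hF (fun x hx => (hd x hx).hasDerivWithinAt)
    ((intervalIntegrable_iff_integrableOn_Ioc_of_le (by norm_num)).2 hIoc)
  rw [intervalIntegral.integral_of_le (by norm_num : (0:ℝ) ≤ 1),
    integral_Ioc_eq_integral_Ioo] at this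
  exact this

lemma intP (a : ℕ) : IntegrableOn (fun z : ℝ => z ^ a / Real.sqrt (1 - z ^ 2)) (Ioo 0 1) volume := by
  have meas : AEStronglyMeasurable (fun z : ℝ => z ^ a / Real.sqrt (1 - z ^ 2))
      (volume.restrict (Ioo 0 1)) := by
    apply ContinuousOn.aestronglyMeasurable _ measurableSet_Ioo
    apply ContinuousOn.div (continuousOn_pow a)
      (Real.continuous_sqrt.comp (by continuity)).continuousOn
    intro x hx
    refine (Real.sqrt_pos.2 ?_).ne'
    show (0:ℝ) < 1 - x ^ 2
    nlinarith [hx.1, hx.2]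
  refine dom_int.mono' meas ?_
  filter_upwards [ae_restrict_mem measurableSet_Ioo] with x hx
  have h0 : (0:ℝ) < x := hx.1
  have h1 : x < 1 := hx.2
  have hu : (0:ℝ) < 1 - x ^ 2 := by nlinarith
  have h1x : (0:ℝ) < 1 - x := by linarith
  rw [Real.norm_eq_abs, abs_of_nonneg (by positivity)]
  have hsq : Real.sqrt (1 - x) ≤ Real.sqrt (1 - x ^ 2) := by
    apply Real.sqrt_le_sqrt; nlinarith
  have hxa : x ^ a ≤ 1 := pow_le_one₀ h0.le h1.le
  have hrw : (1 - x) ^ (-(1:ℝ)/2) = 1 / Real.sqrt (1 - x) := by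
    rw [Real.sqrt_eq_rpow, neg_div, Real.rpow_neg h1x.le]; norm_num
  rw [hrw]
  exact div_le_div₀ zero_le_one hxa (Real.sqrt_pos.2 h1x) hsq

lemma P0 : ∫ z in Ioo (0:ℝ) 1, z ^ 0 / Real.sqrt (1 - z ^ 2) = π / 2 := by
  have := ftc01 Real.arcsin (fun z => z ^ 0 / Real.sqrt (1 - z ^ 2))
    Real.continuous_arcsin.continuousOn
    (fun x hx => by
      have h := Real.hasDerivAt_arcsin (by linarith [hx.1] : x ≠ -1) (ne_of_lt hx.2)
      simpa using h)
    (intP 0)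
  rw [this, Real.arcsin_one, Real.arcsin_zero, sub_zero]

lemma P1 : ∫ z in Ioo (0:ℝ) 1, z ^ 1 / Real.sqrt (1 - z ^ 2) = 1 := by
  have := ftc01 (fun z => -Real.sqrt (1 - z ^ 2)) (fun z => z ^ 1 / Real.sqrt (1 - z ^ 2))
    (Real.continuous_sqrt.comp (by continuity)).neg.continuousOn
    (fun x hx => by
      have hu : (0:ℝ) < 1 - x ^ 2 := by nlinarith [hx.1, hx.2]
      have h1 : HasDerivAt (fun z : ℝ => 1 - z ^ 2) (-(2 * x)) x := by
        simpa using ((hasDerivAt_pow 2 x).const_sub 1)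
      have h2 := ((Real.hasDerivAt_sqrt hu.ne').comp x h1).neg
      refine h2.congr_deriv (Eq.symm ?_)
      have hs : Real.sqrt (1 - x ^ 2) ≠ 0 := (Real.sqrt_pos.2 hu).ne'
      field_simp)
    (intP 1)
  rw [this]
  norm_num

lemma Pstep (a : ℕ) : (↑a + 2 : ℝ) * ∫ z in Ioo (0:ℝ) 1, z ^ (a+2) / Real.sqrt (1 - z ^ 2)
    = (↑a + 1) * ∫ z in Ioo (0:ℝ) 1, z ^ a / Real.sqrt (1 - z ^ 2) := by
  have key := ftc01 (fun z => z ^ (a+1) * Real.sqrt (1 - z ^ 2))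
    (fun z => (↑a+1) * (z ^ a / Real.sqrt (1 - z ^ 2)) - (↑a+2) * (z ^ (a+2) / Real.sqrt (1 - z ^ 2)))
    (((continuous_pow (a+1)).mul (Real.continuous_sqrt.comp (by continuity))).continuousOn)
    (fun x hx => by
      have hu : (0:ℝ) < 1 - x ^ 2 := by nlinarith [hx.1, hx.2]
      have hs : Real.sqrt (1 - x ^ 2) ≠ 0 := (Real.sqrt_pos.2 hu).ne'
      have hsq : Real.sqrt (1 - x ^ 2) * Real.sqrt (1 - x ^ 2) = 1 - x ^ 2 :=
        Real.mul_self_sqrt hu.le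
      have h1 : HasDerivAt (fun z : ℝ => 1 - z ^ 2) (-(2 * x)) x := by
        simpa using ((hasDerivAt_pow 2 x).const_sub 1)
      have h2 := (hasDerivAt_pow (a+1) x).mul ((Real.hasDerivAt_sqrt hu.ne').comp x h1)
      refine h2.congr_deriv (Eq.symm ?_)
      simp only [Function.comp]
      push_cast
      field_simp
      linear_combination (-((↑a:ℝ)+1) * x^a) * hsq)
    (((intP a).const_mul _).sub ((intP (a+2)).const_mul _))
  rw [integral_sub ((intP a).const_mul _) ((intP (a+2)).const_mul _),
    integral_const_mul, integral_const_mul] at key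
  simp at key
  linarith [key]

lemma Pval (a : ℕ) : ∫ z in Ioo (0:ℝ) 1, z ^ a / Real.sqrt (1 - z ^ 2)
    = Real.sqrt π / 2 * (Real.Gamma ((a + 1) / 2) / Real.Gamma ((a : ℝ) / 2 + 1)) := by
  induction a using Nat.twoStepInduction with
  | zero =>
    rw [P0]
    norm_num
    rw [Real.Gamma_one_half_eq, div_mul_eq_mul_div, Real.mul_self_sqrt Real.pi_pos.le]
  | one =>
    rw [P1]
    norm_num
    rw [(show (3:ℝ)/2 = 1/2 + 1 by norm_num), Real.Gamma_add_one (by norm_num),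
      Real.Gamma_one_half_eq]
    have h : Real.sqrt π ≠ 0 := (Real.sqrt_pos.2 Real.pi_pos).ne'
    field_simp
  | more a ih _ =>
    have hstep := Pstep a
    have ha2 : ((a:ℝ) + 2) ≠ 0 := by positivity
    have hP : ∫ z in Ioo (0:ℝ) 1, z ^ (a+2) / Real.sqrt (1 - z ^ 2)
        = ((a:ℝ)+1)/((a:ℝ)+2) * ∫ z in Ioo (0:ℝ) 1, z ^ a / Real.sqrt (1 - z ^ 2) := by
      field_simp
      linarith [hstep]
    rw [hP, ih]
    have hG1 : Real.Gamma ((↑(a+2) + 1)/2) = ((a:ℝ)+1)/2 * Real.Gamma (((a:ℝ)+1)/2) := by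
      push_cast
      rw [show ((a:ℝ) + 2 + 1)/2 = ((a:ℝ)+1)/2 + 1 by ring, Real.Gamma_add_one (by positivity)]
    have hG2 : Real.Gamma ((↑(a+2) : ℝ)/2 + 1) = ((a:ℝ)/2 + 1) * Real.Gamma ((a:ℝ)/2 + 1) := by
      push_cast
      rw [show ((a:ℝ) + 2)/2 + 1 = ((a:ℝ)/2 + 1) + 1 by ring, Real.Gamma_add_one (by positivity)]
    rw [hG1, hG2]
    have hGn : Real.Gamma ((a:ℝ)/2 + 1) ≠ 0 := (Real.Gamma_pos_of_pos (by positivity)).ne'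
    field_simp

lemma num_bounds (k : ℕ) {x : ℝ} (h0 : 0 < x) (h1 : x < 1) :
    0 ≤ 2*x^k - 3*x^(k+2) + 1 ∧ 2*x^k - 3*x^(k+2) + 1 ≤ (k+6) * (1-x) := by
  have hxk : x ^ k ≤ 1 := pow_le_one₀ h0.le h1.le
  have hxk2 : x ^ (k+2) ≤ 1 := pow_le_one₀ h0.le h1.le
  have hxkpos : 0 < x ^ k := pow_pos h0 k
  have hsplit : 2*x^k - 3*x^(k+2) + 1 = (1 - x^(k+2)) + 2*x^k*(1-x^2) := by ring
  have bern : 1 + (↑(k+2):ℝ) * (x - 1) ≤ (1 + (x-1)) ^ (k+2) :=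
    one_add_mul_le_pow (by linarith) (k+2)
  have bern' : 1 - x^(k+2) ≤ (↑k+2) * (1-x) := by
    have : (1 + (x-1)) ^ (k+2) = x ^ (k+2) := by ring_nf
    rw [this] at bern
    push_cast at bern ⊢
    linarith
  have hu2 : (0:ℝ) ≤ 1 - x^2 := by nlinarith
  constructor
  · nlinarith [mul_nonneg hxkpos.le hu2]
  · have h2 : 2*x^k*(1-x^2) ≤ 4*(1-x) := by
      nlinarith [sq_nonneg (1-x), mul_nonneg (sub_nonneg.2 hxk) hu2]
    push_cast
    nlinarith

lemma rpow32 {x : ℝ} (hu : 0 ≤ 1 - x^2) :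
    (1 - x^2) ^ ((3:ℝ)/2) = (1 - x^2) * Real.sqrt (1 - x^2) := by
  rw [show (3:ℝ)/2 = 1 + 1/2 by norm_num, Real.rpow_add' hu (by norm_num), Real.rpow_one,
    ← Real.sqrt_eq_rpow]

lemma main_int (k : ℕ) :
    IntegrableOn (fun z : ℝ => (2*z^k - 3*z^(k+2) + 1) / (1 - z^2) ^ ((3:ℝ)/2)) (Ioo 0 1) volume := by
  have meas : AEStronglyMeasurable (fun z : ℝ => (2*z^k - 3*z^(k+2) + 1) / (1 - z^2) ^ ((3:ℝ)/2))
      (volume.restrict (Ioo 0 1)) := by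
    apply ContinuousOn.aestronglyMeasurable _ measurableSet_Ioo
    apply ContinuousOn.div (by fun_prop)
    · apply ContinuousOn.rpow_const (by fun_prop)
      intro x hx
      left
      show (1:ℝ) - x^2 ≠ 0
      have : (0:ℝ) < 1 - x^2 := by nlinarith [hx.1, hx.2]
      exact this.ne'
    · intro x hx
      have : (0:ℝ) < 1 - x^2 := by nlinarith [hx.1, hx.2]
      exact (Real.rpow_pos_of_pos this _).ne'
  have hdom : IntegrableOn (fun z : ℝ => (↑k+6) * (1 - z) ^ (-(1:ℝ)/2)) (Ioo 0 1) volume :=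
    dom_int.const_mul _
  refine hdom.mono' meas ?_
  filter_upwards [ae_restrict_mem measurableSet_Ioo] with x hx
  have h0 : (0:ℝ) < x := hx.1
  have h1 : x < 1 := hx.2
  have hu : (0:ℝ) < 1 - x^2 := by nlinarith
  have h1x : (0:ℝ) < 1 - x := by linarith
  obtain ⟨hN0, hNle⟩ := num_bounds k h0 h1
  rw [rpow32 hu.le, Real.norm_eq_abs, abs_of_nonneg (by positivity)]
  have hrw : (1 - x) ^ (-(1:ℝ)/2) = 1 / Real.sqrt (1 - x) := by
    rw [Real.sqrt_eq_rpow, neg_div, Real.rpow_neg h1x.le]; norm_num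
  rw [hrw]
  have hden : (1-x) * Real.sqrt (1-x) ≤ (1 - x^2) * Real.sqrt (1 - x^2) := by
    apply mul_le_mul (by nlinarith) (Real.sqrt_le_sqrt (by nlinarith)) (Real.sqrt_nonneg _) hu.le
  have hs1x : (0:ℝ) < Real.sqrt (1-x) := Real.sqrt_pos.2 h1x
  calc (2*x^k - 3*x^(k+2) + 1) / ((1 - x^2) * Real.sqrt (1 - x^2))
      ≤ ((↑k+6) * (1-x)) / ((1-x) * Real.sqrt (1-x)) :=
        div_le_div₀ (by positivity) hNle (by positivity) hden
    _ = (↑k+6) * (1 / Real.sqrt (1-x)) := by field_simp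

lemma Fcont (k : ℕ) : ContinuousOn
    (fun z : ℝ => z * (1 - z^(k+2)) / Real.sqrt (1 - z^2)) (Icc 0 1) := by
  have hG : ContinuousOn (fun z : ℝ => z * (∑ i ∈ Finset.range (k+2), z^i) *
      (Real.sqrt (1-z) / Real.sqrt (1+z))) (Icc 0 1) := by
    apply ContinuousOn.mul
    · exact (continuous_id.mul (continuous_finset_sum _ (fun i _ => continuous_pow i))).continuousOn
    · apply ContinuousOn.div
      · exact (Real.continuous_sqrt.comp (by continuity)).continuousOn
      · exact (Real.continuous_sqrt.comp (by continuity)).continuousOn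
      · intro x hx
        exact (Real.sqrt_pos.2 (by linarith [hx.1] : (0:ℝ) < 1 + x)).ne'
  apply hG.congr
  intro z hz
  have hgeo : (1:ℝ) - z^(k+2) = (∑ i ∈ Finset.range (k+2), z^i) * (1 - z) := by
    have h := geom_sum_mul z (k+2)
    linear_combination h
  have hsqrt : Real.sqrt (1 - z^2) = Real.sqrt (1-z) * Real.sqrt (1+z) := by
    rw [show (1:ℝ) - z^2 = (1-z)*(1+z) by ring, Real.sqrt_mul (by linarith [hz.2])]
  show z * (1 - z^(k+2)) / Real.sqrt (1 - z^2)
      = z * (∑ i ∈ Finset.range (k+2), z^i) * (Real.sqrt (1-z) / Real.sqrt (1+z))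
  rw [hgeo, hsqrt]
  calc z * ((∑ i ∈ Finset.range (k+2), z^i) * (1-z)) / (Real.sqrt (1-z) * Real.sqrt (1+z))
      = z * (∑ i ∈ Finset.range (k+2), z^i) * ((1-z)/Real.sqrt (1-z)/Real.sqrt (1+z)) := by
        ring
    _ = z * (∑ i ∈ Finset.range (k+2), z^i) * (Real.sqrt (1-z)/Real.sqrt (1+z)) := by
        rw [Real.div_sqrt]

lemma Fderiv (k : ℕ) {x : ℝ} (hx : x ∈ Ioo (0:ℝ) 1) :
    HasDerivAt (fun z : ℝ => z * (1 - z^(k+2)) / Real.sqrt (1 - z^2))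
      ((2*x^k - 3*x^(k+2) + 1) / (1 - x^2) ^ ((3:ℝ)/2)
        - (2 * (x^k / Real.sqrt (1-x^2)) + (↑k+2) * (x^(k+2) / Real.sqrt (1-x^2)))) x := by
  have hu : (0:ℝ) < 1 - x^2 := by nlinarith [hx.1, hx.2]
  have hs : Real.sqrt (1-x^2) ≠ 0 := (Real.sqrt_pos.2 hu).ne'
  have hsq : Real.sqrt (1-x^2) * Real.sqrt (1-x^2) = 1 - x^2 := Real.mul_self_sqrt hu.le
  have hc : HasDerivAt (fun z : ℝ => z * (1 - z^(k+2)))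
      (1 * (1 - x^(k+2)) + x * -(↑(k+2) * x^(k+2-1))) x :=
    (hasDerivAt_id x).mul ((hasDerivAt_pow (k+2) x).const_sub 1)
  have h1 : HasDerivAt (fun z : ℝ => 1 - z^2) (-(2*x)) x := by
    simpa using ((hasDerivAt_pow 2 x).const_sub 1)
  have hd : HasDerivAt (fun z : ℝ => Real.sqrt (1 - z^2)) (1/(2*Real.sqrt (1-x^2)) * -(2*x)) x :=
    (Real.hasDerivAt_sqrt hu.ne').comp x h1
  have hdiv := hc.div hd hs
  refine hdiv.congr_deriv (Eq.symm ?_)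
  rw [rpow32 hu.le]
  have hx0 : x ≠ 0 := ne_of_gt hx.1
  set s := Real.sqrt (1 - x^2) with hs_def
  have hkk : k + 2 - 1 = k + 1 := rfl
  rw [hkk]
  push_cast
  field_simp
  linear_combination (x^2 - x^4 * x^k) * hsq

lemma w_int (k : ℕ) : IntegrableOn (fun z : ℝ =>
    2 * (z^k / Real.sqrt (1-z^2)) + (↑k+2) * (z^(k+2) / Real.sqrt (1-z^2))) (Ioo 0 1) volume :=
  ((intP k).const_mul 2).add ((intP (k+2)).const_mul _)

lemma main_val (k : ℕ) :
    ∫ z in Ioo (0:ℝ) 1, (2*z^k - 3*z^(k+2) + 1) / (1 - z^2) ^ ((3:ℝ)/2)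
      = 2 * (∫ z in Ioo (0:ℝ) 1, z^k / Real.sqrt (1-z^2))
        + (↑k+2) * ∫ z in Ioo (0:ℝ) 1, z^(k+2) / Real.sqrt (1-z^2) := by
  have hsub : IntegrableOn (fun z : ℝ =>
      (2*z^k - 3*z^(k+2) + 1) / (1 - z^2) ^ ((3:ℝ)/2)
        - (2 * (z^k / Real.sqrt (1-z^2)) + (↑k+2) * (z^(k+2) / Real.sqrt (1-z^2)))) (Ioo 0 1) volume :=
    (main_int k).sub (w_int k)
  have hFTC := ftc01 (fun z : ℝ => z * (1 - z^(k+2)) / Real.sqrt (1 - z^2)) _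
    (Fcont k) (fun x hx => Fderiv k hx) hsub
  have hzero : (fun z : ℝ => z * (1 - z^(k+2)) / Real.sqrt (1 - z^2)) 1
      - (fun z : ℝ => z * (1 - z^(k+2)) / Real.sqrt (1 - z^2)) 0 = 0 := by
    norm_num
  rw [hzero] at hFTC
  rw [integral_sub (main_int k) (w_int k)] at hFTC
  have hw : ∫ z in Ioo (0:ℝ) 1, (2 * (z^k / Real.sqrt (1-z^2)) + (↑k+2) * (z^(k+2) / Real.sqrt (1-z^2)))
      = 2 * (∫ z in Ioo (0:ℝ) 1, z^k / Real.sqrt (1-z^2))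
        + (↑k+2) * ∫ z in Ioo (0:ℝ) 1, z^(k+2) / Real.sqrt (1-z^2) := by
    rw [integral_add ((intP k).const_mul 2) ((intP (k+2)).const_mul _),
      integral_const_mul, integral_const_mul]
  rw [hw] at hFTC
  linarith [hFTC]

theorem geodesic_tof_first_order_integral
    (D : ℕ) (hD : 4 < D) :
    IntegrableOn (fun z : ℝ => (2 * z ^ (D - 5) - 3 * z ^ (D - 3) + 1) / (1 - z ^ 2) ^ ((3 : ℝ) / 2))
      (Ioo 0 1) volume ∧
    ∫ z in Ioo (0 : ℝ) 1, (2 * z ^ (D - 5) - 3 * z ^ (D - 3) + 1) / (1 - z ^ 2) ^ ((3 : ℝ) / 2) =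
      Real.sqrt π * ((D - 1) * (D - 3) / (2 * (D - 4))) *
        (Real.Gamma (D / 2) / Real.Gamma ((D + 1) / 2)) := by
  obtain ⟨k, rfl⟩ : ∃ k, D = k + 5 := ⟨D - 5, by omega⟩
  have e1 : k + 5 - 5 = k := by omega
  have e2 : k + 5 - 3 = k + 2 := by omega
  rw [e1, e2]
  constructor
  · exact main_int k
  · rw [main_val k, Pval k, Pval (k+2)]
    have c2 : ((↑(k+2):ℝ) + 1)/2 = ((↑k:ℝ)+1)/2 + 1 := by push_cast; ring
    have c3 : ((↑(k+2):ℝ))/2 + 1 = ((↑k:ℝ)/2 + 1) + 1 := by push_cast; ring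
    have c4 : ((↑(k+5):ℝ))/2 = (((↑k:ℝ)+1)/2 + 1) + 1 := by push_cast; ring
    have c5 : ((↑(k+5):ℝ) + 1)/2 = (((↑k:ℝ)/2 + 1) + 1) + 1 := by push_cast; ring
    rw [c2, c3, c4, c5,
      Real.Gamma_add_one (by positivity : (((↑k:ℝ)+1)/2 + 1) ≠ 0),
      Real.Gamma_add_one (by positivity : (((↑k:ℝ)/2 + 1) + 1) ≠ 0),
      Real.Gamma_add_one (by positivity : (((↑k:ℝ)+1)/2) ≠ 0),
      Real.Gamma_add_one (by positivity : (((↑k:ℝ)/2 + 1)) ≠ 0)]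
    have hG1 : (0:ℝ) < Real.Gamma (((↑k:ℝ)+1)/2) := Real.Gamma_pos_of_pos (by positivity)
    have hG2 : (0:ℝ) < Real.Gamma ((↑k:ℝ)/2 + 1) := Real.Gamma_pos_of_pos (by positivity)
    have hk1 : ((↑k:ℝ)+1) ≠ 0 := by positivity
    have hk2 : ((↑k:ℝ)+2) ≠ 0 := by positivity
    have hk4 : ((↑k:ℝ)+4) ≠ 0 := by positivity
    have hG1' := hG1.ne'
    have hG2' := hG2.ne'
    simp only [Nat.cast_add, Nat.cast_ofNat]
    have c7 : ((k:ℝ) + 5 - 1) = (k:ℝ) + 4 := by ring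
    have c8 : ((k:ℝ) + 5 - 3) = (k:ℝ) + 2 := by ring
    have c9 : (2:ℝ) * ((k:ℝ) + 5 - 4) = 2 * ((k:ℝ) + 1) := by ring
    rw [c7, c8, c9]
    have h5 : ((k:ℝ)/2 + 1) ≠ 0 := by positivity
    have h6 : ((k:ℝ)/2 + 1 + 1) ≠ 0 := by positivity
    have h7 : (((k:ℝ)+1)/2) ≠ 0 := by positivity
    have h8 : (((k:ℝ)+1)/2 + 1) ≠ 0 := by positivity
    field_simp
    ring
end

section
/- The integral $\int_{r_0/R}^1 \frac{2 z^{-1} - 3 z + 1}{(1-z^2)^{3/2}}\,dz$ (the $D=4$ time-of-flight correction integrand) diverges to $+\infty$ as $R \to \infty$ with $r_0 > 0$ fixed; more precisely it equals $2\ln(2R/r_0) + 1 + o(1)$ as $R/r_0 \to \infty$. -/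
open Real Filter intervalIntegral

open MeasureTheory

lemma sq_rpow_threehalf {u : ℝ} (hu : 0 ≤ u) : ((u ^ 2 : ℝ)) ^ ((3:ℝ)/2) = u ^ 3 := by
  rw [← Real.rpow_natCast u 2, ← Real.rpow_mul hu, ← Real.rpow_natCast u 3]
  norm_num

lemma integrand_eq {z : ℝ} (h0 : 0 < z) (h1 : z < 1) :
    (2 * z⁻¹ - 3 * z + 1) / (1 - z ^ 2) ^ ((3:ℝ)/2)
      = (3 * z + 2) / (z * (1 + z) * Real.sqrt (1 - z ^ 2)) := by
  have hpos : (0:ℝ) < 1 - z ^ 2 := by nlinarith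
  have hu : 0 < Real.sqrt (1 - z ^ 2) := Real.sqrt_pos.mpr hpos
  have hu2 : Real.sqrt (1 - z ^ 2) ^ 2 = 1 - z ^ 2 := Real.sq_sqrt hpos.le
  rw [← hu2, sq_rpow_threehalf hu.le]
  field_simp
  rw [Real.sqrt_sq hu.le]
  linear_combination (-(3*z+2)*Real.sqrt (1-z^2)) * hu2

noncomputable def tofF (z : ℝ) : ℝ :=
  2 * Real.log z - 2 * Real.log (1 + Real.sqrt (1 - z ^ 2)) - Real.sqrt ((1 - z) / (1 + z))

lemma hasDerivAt_tofF {z : ℝ} (h0 : 0 < z) (h1 : z < 1) :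
    HasDerivAt tofF ((3 * z + 2) / (z * (1 + z) * Real.sqrt (1 - z ^ 2))) z := by
  have hpos : (0:ℝ) < 1 - z ^ 2 := by nlinarith
  have hu : 0 < Real.sqrt (1 - z ^ 2) := Real.sqrt_pos.mpr hpos
  have hu2 : Real.sqrt (1 - z ^ 2) ^ 2 = 1 - z ^ 2 := Real.sq_sqrt hpos.le
  have hq : (0:ℝ) < (1 - z) / (1 + z) := div_pos (by linarith) (by linarith)
  have hw : 0 < Real.sqrt ((1 - z) / (1 + z)) := Real.sqrt_pos.mpr hq
  have hw2 : Real.sqrt ((1 - z) / (1 + z)) ^ 2 = (1 - z) / (1 + z) := Real.sq_sqrt hq.le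
  have hinner : HasDerivAt (fun z : ℝ => 1 - z ^ 2) (-(2 * z)) z := by
    simpa using ((hasDerivAt_pow 2 z).const_sub 1)
  have hsqrt : HasDerivAt (fun z : ℝ => Real.sqrt (1 - z ^ 2))
      (-(2 * z) / (2 * Real.sqrt (1 - z ^ 2))) z := hinner.sqrt hpos.ne'
  have hlog1 : HasDerivAt (fun z : ℝ => Real.log z) z⁻¹ z := Real.hasDerivAt_log h0.ne'
  have h1u : (0:ℝ) < 1 + Real.sqrt (1 - z ^ 2) := by positivity
  have hlog2 : HasDerivAt (fun z : ℝ => Real.log (1 + Real.sqrt (1 - z ^ 2)))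
      ((-(2 * z) / (2 * Real.sqrt (1 - z ^ 2))) / (1 + Real.sqrt (1 - z ^ 2))) z :=
    (hsqrt.const_add 1).log h1u.ne'
  have hdiv : HasDerivAt (fun z : ℝ => (1 - z) / (1 + z))
      ((-1 * (1 + z) - (1 - z) * 1) / (1 + z) ^ 2) z := by
    exact ((hasDerivAt_id z).const_sub 1).div ((hasDerivAt_id z).const_add 1)
      (by positivity)
  have hsq2 : HasDerivAt (fun z : ℝ => Real.sqrt ((1 - z) / (1 + z)))
      (((-1 * (1 + z) - (1 - z) * 1) / (1 + z) ^ 2) / (2 * Real.sqrt ((1 - z) / (1 + z)))) z :=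
    hdiv.sqrt hq.ne'
  have hD := ((hlog1.const_mul 2).sub (hlog2.const_mul 2)).sub hsq2
  convert hD using 1
  · rfl
  · rfl
  · rfl
  -- eliminate √(1 - z²) in favour of (1+z) * √((1-z)/(1+z))
  have hwu : (1 + z) * Real.sqrt ((1 - z) / (1 + z)) = Real.sqrt (1 - z ^ 2) := by
    have he : (1 - z ^ 2 : ℝ) = (1 + z) ^ 2 * ((1 - z) / (1 + z)) := by
      field_simp; ring
    rw [he, Real.sqrt_mul (by positivity), Real.sqrt_sq (by linarith)]
  rw [← hwu]
  set w := Real.sqrt ((1 - z) / (1 + z)) with hwdef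
  have hrel : (1 + z) * w ^ 2 = 1 - z := by
    rw [hw2]; field_simp
  have h1w : (0:ℝ) < 1 + (1 + z) * w := by positivity
  field_simp
  ring_nf
  linear_combination (-4*(1+z)^2) * hrel

lemma integrand_integrable {a : ℝ} (h0 : 0 < a) (h1 : a < 1) :
    IntervalIntegrable (fun z : ℝ => (2 * z⁻¹ - 3 * z + 1) / (1 - z ^ 2) ^ ((3:ℝ)/2))
      volume a 1 := by
  have base : IntervalIntegrable (fun x : ℝ => x ^ (-(1/2) : ℝ)) volume 0 (1 - a) :=
    intervalIntegral.intervalIntegrable_rpow' (by norm_num)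
  have comp : IntervalIntegrable (fun x : ℝ => (1 - x) ^ (-(1/2) : ℝ)) volume a 1 := by
    have := (base.comp_sub_left 1).symm
    norm_num at this
    exact this
  have hcont : ContinuousOn (fun z : ℝ => (3 * z + 2) / (z * (1 + z) * Real.sqrt (1 + z)))
      (Set.uIcc a 1) := by
    apply ContinuousOn.div
    · fun_prop
    · fun_prop
    · intro x hx
      rw [Set.uIcc_of_le h1.le] at hx
      have hxa : a ≤ x := hx.1
      have : (0:ℝ) < x := lt_of_lt_of_le h0 hxa
      have h1x : (0:ℝ) < 1 + x := by linarith
      have := Real.sqrt_pos.mpr h1x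
      positivity
  have prod := comp.continuousOn_mul hcont
  apply prod.congr
  rw [Set.uIoc_of_le h1.le]
  · intro z hz
    rcases eq_or_lt_of_le hz.2 with hz1 | hz1
    · subst hz1
      norm_num
    · have hz0 : 0 < z := lt_trans h0 hz.1
      have h1z : (0:ℝ) < 1 - z := by linarith
      have h1z' : (0:ℝ) < 1 + z := by linarith
      have hmul : Real.sqrt (1 - z ^ 2) = Real.sqrt (1 - z) * Real.sqrt (1 + z) := by
        rw [← Real.sqrt_mul h1z.le]; ring_nf
      have hs : 0 < Real.sqrt (1 - z) := Real.sqrt_pos.mpr h1z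
      have ht : 0 < Real.sqrt (1 + z) := Real.sqrt_pos.mpr h1z'
      show (3 * z + 2) / (z * (1 + z) * Real.sqrt (1 + z)) * (1 - z) ^ (-(1/2) : ℝ)
          = (2 * z⁻¹ - 3 * z + 1) / (1 - z ^ 2) ^ ((3:ℝ)/2)
      rw [integrand_eq hz0 hz1, Real.rpow_neg h1z.le, ← Real.sqrt_eq_rpow, hmul]
      field_simp

lemma tofF_continuousOn {a : ℝ} (h0 : 0 < a) : ContinuousOn tofF (Set.Icc a 1) := by
  unfold tofF
  apply ContinuousOn.sub (ContinuousOn.sub ?_ ?_) ?_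
  · exact continuousOn_const.mul (ContinuousOn.log continuousOn_id
      fun x hx => (lt_of_lt_of_le h0 hx.1).ne')
  · refine continuousOn_const.mul (ContinuousOn.log (by fun_prop) fun x hx => ?_)
    have := Real.sqrt_nonneg (1 - x ^ 2)
    positivity
  · exact Real.continuous_sqrt.comp_continuousOn
      ((continuousOn_const.sub continuousOn_id).div (continuousOn_const.add continuousOn_id)
        (fun x hx => ne_of_gt (by linarith [hx.1] : (0:ℝ) < 1 + x)))

lemma integral_value {a : ℝ} (h0 : 0 < a) (h1 : a < 1) :
    (∫ z in a..1, (2 * z⁻¹ - 3 * z + 1) / (1 - z ^ 2) ^ ((3:ℝ)/2))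
      = 2 * Real.log (1 + Real.sqrt (1 - a ^ 2)) - 2 * Real.log a
        + Real.sqrt ((1 - a) / (1 + a)) := by
  have hderiv : ∀ x ∈ Set.Ioo a 1,
      HasDerivWithinAt tofF ((2 * x⁻¹ - 3 * x + 1) / (1 - x ^ 2) ^ ((3:ℝ)/2)) (Set.Ioi x) x := by
    intro x hx
    have hx0 : 0 < x := lt_trans h0 hx.1
    rw [integrand_eq hx0 hx.2]
    exact (hasDerivAt_tofF hx0 hx.2).hasDerivWithinAt
  rw [intervalIntegral.integral_eq_sub_of_hasDeriv_right_of_le h1.le (tofF_continuousOn h0)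
    hderiv (integrand_integrable h0 h1)]
  have hF1 : tofF 1 = 0 := by
    unfold tofF
    norm_num
  rw [hF1]
  unfold tofF
  ring

theorem tof_correction_log_divergence_D4
    (r₀ : ℝ) (h₀ : 0 < r₀) :
    Tendsto (fun R : ℝ => ∫ z in (r₀ / R)..1, (2 * z⁻¹ - 3 * z + 1) / (1 - z ^ 2) ^ ((3 : ℝ) / 2))
      atTop atTop ∧
    Tendsto (fun R : ℝ =>
        (∫ z in (r₀ / R)..1, (2 * z⁻¹ - 3 * z + 1) / (1 - z ^ 2) ^ ((3 : ℝ) / 2)) -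
          (2 * Real.log (2 * R / r₀) + 1))
      atTop (nhds 0) := by
  set g : ℝ → ℝ := fun a => 2 * Real.log (1 + Real.sqrt (1 - a ^ 2)) - 2 * Real.log 2
      + Real.sqrt ((1 - a) / (1 + a)) - 1 with hg
  have c1 : ContinuousAt (fun a : ℝ => 1 + Real.sqrt (1 - a ^ 2)) 0 := by fun_prop
  have c2 : ContinuousAt (fun a : ℝ => Real.log (1 + Real.sqrt (1 - a ^ 2))) 0 := by
    apply c1.log
    norm_num
  have c3 : ContinuousAt (fun a : ℝ => Real.sqrt ((1 - a) / (1 + a))) 0 :=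
    Real.continuous_sqrt.continuousAt.comp
      ((continuousAt_const.sub continuousAt_id).div (continuousAt_const.add continuousAt_id)
        (by norm_num))
  have hgc : ContinuousAt g 0 :=
    ContinuousAt.sub (ContinuousAt.add (ContinuousAt.sub (c2.const_mul 2) continuousAt_const) c3)
      continuousAt_const
  have hg0 : g 0 = 0 := by
    simp only [hg]
    norm_num [Real.sqrt_one]
  have ha : Tendsto (fun R : ℝ => r₀ / R) atTop (nhds 0) :=
    tendsto_const_nhds.div_atTop tendsto_id
  have hEv : ∀ᶠ R in atTop,
      (∫ z in (r₀ / R)..1, (2 * z⁻¹ - 3 * z + 1) / (1 - z ^ 2) ^ ((3 : ℝ) / 2)) -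
        (2 * Real.log (2 * R / r₀) + 1) = g (r₀ / R) := by
    filter_upwards [eventually_gt_atTop r₀] with R hR
    have hR0 : 0 < R := lt_trans h₀ hR
    have h0a : 0 < r₀ / R := div_pos h₀ hR0
    have h1a : r₀ / R < 1 := (div_lt_one hR0).mpr hR
    rw [integral_value h0a h1a]
    have hlog : Real.log (2 * R / r₀) = Real.log 2 - Real.log (r₀ / R) := by
      rw [Real.log_div (by positivity) h₀.ne', Real.log_mul two_ne_zero hR0.ne',
        Real.log_div h₀.ne' hR0.ne']
      ring
    rw [hlog, hg]
    ring
  have h2 : Tendsto (fun R : ℝ =>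
      (∫ z in (r₀ / R)..1, (2 * z⁻¹ - 3 * z + 1) / (1 - z ^ 2) ^ ((3 : ℝ) / 2)) -
        (2 * Real.log (2 * R / r₀) + 1)) atTop (nhds 0) := by
    have h := hgc.tendsto.comp ha
    rw [hg0] at h
    exact Filter.Tendsto.congr' (Filter.EventuallyEq.symm hEv) h
  refine ⟨?_, h2⟩
  have hc : Tendsto (fun R : ℝ => 2 * Real.log (2 * R / r₀) + 1) atTop atTop := by
    apply tendsto_atTop_add_const_right
    apply Tendsto.const_mul_atTop two_pos
    apply Real.tendsto_log_atTop.comp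
    apply Tendsto.atTop_div_const h₀
    exact tendsto_id.const_mul_atTop two_pos
  have heq : (fun R : ℝ =>
      ∫ z in (r₀ / R)..1, (2 * z⁻¹ - 3 * z + 1) / (1 - z ^ 2) ^ ((3 : ℝ) / 2))
      = fun R : ℝ =>
        ((∫ z in (r₀ / R)..1, (2 * z⁻¹ - 3 * z + 1) / (1 - z ^ 2) ^ ((3 : ℝ) / 2)) -
          (2 * Real.log (2 * R / r₀) + 1)) + (2 * Real.log (2 * R / r₀) + 1) := by
    funext R
    ring
  rw [heq]
  exact h2.add_atTop hc
end

section
/- For every integer $D \geq 4$, the improper integral $\int_0^1 \frac{1 - 2 z^{D-1} + z^{D+1}}{(1-z^2)^{3/2}}\,dz$ converges and equals $\sqrt{\pi}\,\frac{D-2}{2}\cdot\frac{\Gamma(D/2)}{\Gamma((D+1)/2)}$. -/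
open Real MeasureTheory Set

lemma real_beta (a b : ℝ) (ha : 0 < a) (hb : 0 < b) :
    ∫ t in (0:ℝ)..1, t ^ (a-1) * (1-t) ^ (b-1) = Real.Gamma a * Real.Gamma b / Real.Gamma (a+b) := by
  have key := Complex.Gamma_mul_Gamma_eq_betaIntegral (s := (a:ℂ)) (t := (b:ℂ))
    (by simpa using ha) (by simpa using hb)
  have hB : Complex.betaIntegral (a:ℂ) (b:ℂ)
      = ((∫ t in (0:ℝ)..1, t ^ (a-1) * (1-t) ^ (b-1) : ℝ) : ℂ) := by
    rw [Complex.betaIntegral, ← intervalIntegral.integral_ofReal]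
    apply intervalIntegral.integral_congr
    intro x hx
    rw [uIcc_of_le zero_le_one] at hx
    have h1 : (0:ℝ) ≤ x := hx.1
    have h2 : (0:ℝ) ≤ 1 - x := by linarith [hx.2]
    push_cast
    rw [Complex.ofReal_cpow h1, Complex.ofReal_cpow h2]
    push_cast
    ring_nf
  rw [hB] at key
  have hne : Real.Gamma (a+b) ≠ 0 := (Real.Gamma_pos_of_pos (by linarith)).ne'
  have : (a:ℂ) + (b:ℂ) = ((a+b : ℝ) : ℂ) := by push_cast; ring
  rw [this, Complex.Gamma_ofReal, Complex.Gamma_ofReal, Complex.Gamma_ofReal,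
    ← Complex.ofReal_mul, ← Complex.ofReal_mul] at key
  have := Complex.ofReal_inj.mp key
  field_simp
  linarith [this]

lemma integrableOn_one_sub_rpow {r : ℝ} (hr : -1 < r) :
    IntegrableOn (fun x : ℝ => (1-x) ^ r) (Ioo 0 1) := by
  have h : IntervalIntegrable (fun x : ℝ => x ^ r) volume 0 1 :=
    intervalIntegral.intervalIntegrable_rpow' hr
  have h2 := h.comp_sub_left 1
  simp only [sub_self, sub_zero] at h2
  have := h2.symm.1
  rw [integrableOn_Ioc_iff_integrableOn_Ioo] at this
  exact this

lemma aux_integrable {φ : ℝ → ℝ} {C r : ℝ} (hr : -1 < r)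
    (hφ : ContinuousOn φ (Ioo 0 1)) (hb : ∀ x ∈ Ioo (0:ℝ) 1, |φ x| ≤ C) :
    IntegrableOn (fun x => φ x * (1-x) ^ r) (Ioo 0 1) := by
  have hmeas : AEStronglyMeasurable (fun x => φ x * (1-x) ^ r)
      (volume.restrict (Ioo 0 1)) := by
    apply ContinuousOn.aestronglyMeasurable _ measurableSet_Ioo
    apply hφ.mul
    apply ContinuousOn.rpow_const (by fun_prop)
    intro x hx
    left
    simp only [mem_Ioo] at hx
    linarith [hx.2]
  apply Integrable.mono' ((integrableOn_one_sub_rpow hr).const_mul C) hmeas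
  rw [ae_restrict_iff' measurableSet_Ioo]
  filter_upwards with x hx
  have h1 : (0:ℝ) ≤ (1-x) ^ r := Real.rpow_nonneg (by simp [mem_Ioo] at hx; linarith [hx.2]) r
  rw [norm_mul, Real.norm_eq_abs, Real.norm_eq_abs, abs_of_nonneg h1]
  exact mul_le_mul_of_nonneg_right (hb x hx) h1

lemma sqrt_one_sub_sq {z : ℝ} (hz : z ∈ Ioo (0:ℝ) 1) :
    Real.sqrt (1 - z^2) = Real.sqrt (1-z) * Real.sqrt (1+z) := by
  rw [← Real.sqrt_mul (by obtain ⟨h1,h2⟩ := hz; linarith)]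
  ring_nf

lemma k_integrable (D : ℕ) (hD : 4 ≤ D) :
    IntegrableOn (fun z : ℝ => z ^ (D-1) / Real.sqrt (1 - z^2)) (Ioo 0 1) := by
  have h := aux_integrable (φ := fun z => z ^ (D-1) / Real.sqrt (1+z)) (C := 1)
    (r := -(1/2)) (by norm_num)
    (by
      apply ContinuousOn.div (by fun_prop) (by fun_prop)
      intro x hx
      have : (0:ℝ) < 1 + x := by obtain ⟨h1,h2⟩ := hx; linarith
      positivity)
    (by
      intro x hx
      obtain ⟨h1, h2⟩ := hx
      rw [abs_div, abs_of_nonneg (by positivity), abs_of_nonneg (Real.sqrt_nonneg _)]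
      have hs : (1:ℝ) ≤ Real.sqrt (1+x) := by
        nlinarith [Real.sq_sqrt (show (0:ℝ) ≤ 1+x by linarith), Real.sqrt_nonneg (1+x)]
      calc x ^ (D-1) / Real.sqrt (1+x) ≤ x ^ (D-1) / 1 := by
            apply div_le_div_of_nonneg_left (by positivity) (by norm_num) hs
        _ ≤ 1 := by
            rw [div_one]
            exact pow_le_one₀ h1.le h2.le)
  apply h.congr_fun _ measurableSet_Ioo
  intro z hz
  obtain ⟨h1, h2⟩ := hz
  have hz' : z ∈ Ioo (0:ℝ) 1 := ⟨h1, h2⟩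
  dsimp only
  rw [Real.rpow_neg (by linarith), ← Real.sqrt_eq_rpow, sqrt_one_sub_sq hz']
  have hs1 : Real.sqrt (1-z) ≠ 0 := Real.sqrt_ne_zero'.mpr (by linarith)
  have hs2 : Real.sqrt (1+z) ≠ 0 := Real.sqrt_ne_zero'.mpr (by linarith)
  field_simp

lemma k_value (D : ℕ) (hD : 4 ≤ D) :
    ∫ z in Ioo (0:ℝ) 1, z ^ (D-1) / Real.sqrt (1 - z^2)
      = Real.sqrt π / 2 * (Real.Gamma ((D:ℝ)/2) / Real.Gamma (((D:ℝ)+1)/2)) := by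
  set g : ℝ → ℝ := fun t => t ^ ((D:ℝ)/2 - 1) * (1-t) ^ ((1:ℝ)/2 - 1) with hg
  have h_img : (fun z : ℝ => z^2) '' Ioo 0 1 = Ioo 0 1 := by
    ext t
    constructor
    · rintro ⟨z, ⟨h1, h2⟩, rfl⟩
      exact ⟨by positivity, by show z^2 < 1; nlinarith⟩
    · rintro ⟨h1, h2⟩
      exact ⟨Real.sqrt t, ⟨Real.sqrt_pos.mpr h1, by
        nlinarith [Real.sq_sqrt h1.le, Real.sqrt_nonneg t]⟩, Real.sq_sqrt h1.le⟩
  have hinj : InjOn (fun z : ℝ => z^2) (Ioo 0 1) := by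
    intro a ha b hb h
    simp only [mem_Ioo] at ha hb
    simp only at h
    have h0 : (a-b)*(a+b) = 0 := by nlinarith
    rcases mul_eq_zero.mp h0 with h' | h'
    · linarith
    · linarith [ha.1, hb.1]
  have hderiv : ∀ x ∈ Ioo (0:ℝ) 1,
      HasDerivWithinAt (fun z : ℝ => z^2) (2*x) (Ioo 0 1) x := by
    intro x _
    simpa using (hasDerivAt_pow 2 x).hasDerivWithinAt
  have h_subst := integral_image_eq_integral_abs_deriv_smul measurableSet_Ioo hderiv hinj g
  rw [h_img] at h_subst
  have h_rhs : ∫ x in Ioo (0:ℝ) 1, |2*x| • g (x^2)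
      = 2 * ∫ z in Ioo (0:ℝ) 1, z ^ (D-1) / Real.sqrt (1 - z^2) := by
    rw [← integral_const_mul]
    apply setIntegral_congr_fun measurableSet_Ioo
    intro x hx
    obtain ⟨h1, h2⟩ := hx
    have hx' : x ∈ Ioo (0:ℝ) 1 := ⟨h1, h2⟩
    have hsq : (x^2 : ℝ) ^ ((D:ℝ)/2 - 1) = x ^ (D-2 : ℕ) := by
      rw [← Real.rpow_natCast x 2, ← Real.rpow_mul h1.le,
        show ((2:ℕ):ℝ) * ((D:ℝ)/2 - 1) = ((D-2 : ℕ) : ℝ) by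
          push_cast [Nat.cast_sub (by omega : 2 ≤ D)]; ring,
        Real.rpow_natCast]
    have h1x : (0:ℝ) < 1 - x^2 := by nlinarith
    have hrp : ((1:ℝ) - x^2) ^ ((1:ℝ)/2 - 1) = 1 / Real.sqrt (1 - x^2) := by
      rw [show (1:ℝ)/2 - 1 = -(1/2) by norm_num, Real.rpow_neg h1x.le,
        ← Real.sqrt_eq_rpow, one_div]
    simp only [hg, smul_eq_mul, hsq, hrp, abs_of_nonneg (by linarith : (0:ℝ) ≤ 2*x)]
    have : x ^ (D-2) * x = x ^ (D-1) := by
      rw [← pow_succ]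
      congr 1
      omega
    field_simp
    nlinarith [this, Real.sqrt_nonneg (1-x^2)]
  have h_lhs : ∫ t in Ioo (0:ℝ) 1, g t
      = Real.Gamma ((D:ℝ)/2) * Real.Gamma (1/2) / Real.Gamma ((D:ℝ)/2 + 1/2) := by
    rw [← integral_Ioc_eq_integral_Ioo, ← intervalIntegral.integral_of_le zero_le_one]
    exact real_beta ((D:ℝ)/2) (1/2) (by positivity) (by norm_num)
  rw [h_lhs, h_rhs] at h_subst
  rw [Real.Gamma_one_half_eq] at h_subst
  have : Real.Gamma ((D:ℝ)/2 + 1/2) = Real.Gamma (((D:ℝ)+1)/2) := by ring_nf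
  rw [this] at h_subst
  have hne : Real.Gamma (((D:ℝ)+1)/2) ≠ 0 :=
    (Real.Gamma_pos_of_pos (by positivity)).ne'
  field_simp at h_subst ⊢
  linarith

theorem FFR_bending_angle_correction_integral
    (D : ℕ) (hD : 4 ≤ D) :
    IntegrableOn (fun z : ℝ => (1 - 2 * z ^ (D - 1) + z ^ (D + 1)) / (1 - z ^ 2) ^ ((3 : ℝ) / 2))
      (Ioo 0 1) volume ∧
    ∫ z in Ioo (0 : ℝ) 1, (1 - 2 * z ^ (D - 1) + z ^ (D + 1)) / (1 - z ^ 2) ^ ((3 : ℝ) / 2) =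
      Real.sqrt π * ((D - 2) / 2) * (Real.Gamma (D / 2) / Real.Gamma ((D + 1) / 2)) := by
  set f : ℝ → ℝ :=
    fun z => (1 - 2 * z ^ (D - 1) + z ^ (D + 1)) / (1 - z ^ 2) ^ ((3 : ℝ) / 2) with hf
  set k : ℝ → ℝ := fun z => z ^ (D-1) / Real.sqrt (1 - z^2) with hk
  set S : ℝ → ℝ := fun z => ∑ i ∈ Finset.range (D-1), z ^ i with hS
  -- basic facts on Ioo
  have hgeom : ∀ z : ℝ, (1-z) * S z = 1 - z ^ (D-1) := by
    intro z
    simp only [hS]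
    linear_combination (-1 : ℝ) * geom_sum_mul z (D-1)
  have hzD : ∀ z : ℝ, z ^ D = z * z ^ (D-1) := by
    intro z
    rw [← pow_succ']
    congr 1
    omega
  have hzD1 : ∀ z : ℝ, z ^ (D+1) = z^2 * z ^ (D-1) := by
    intro z
    rw [← pow_add]
    congr 1
    omega
  have hM : ∀ z : ℝ, 1 - 2 * z ^ (D-1) + z ^ (D+1)
      = (1-z) * (S z - z ^ (D-1) * (1+z)) := by
    intro z
    linear_combination (-1 : ℝ) * hgeom z + hzD1 z
  have hf_eq : ∀ z ∈ Ioo (0:ℝ) 1, f z =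
      (1 - 2 * z ^ (D - 1) + z ^ (D + 1)) / ((1 - z^2) * Real.sqrt (1 - z^2)) := by
    intro z hz
    obtain ⟨h1, h2⟩ := hz
    have ht : (0:ℝ) < 1 - z^2 := by nlinarith
    simp only [hf]
    rw [show (3:ℝ)/2 = 1 + 1/2 by norm_num, Real.rpow_add ht, Real.rpow_one,
      ← Real.sqrt_eq_rpow]
  -- integrability of f
  have hf_int : IntegrableOn f (Ioo 0 1) := by
    have h := aux_integrable (φ := fun z => (S z - z ^ (D-1) * (1+z)) /
        ((1+z) * Real.sqrt (1+z))) (C := (D:ℝ) + 1) (r := -(1/2)) (by norm_num)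
      (by
        apply ContinuousOn.div
        · apply ContinuousOn.sub
          · exact (continuous_finset_sum _ fun i _ => continuous_pow i).continuousOn
          · fun_prop
        · fun_prop
        · intro x hx
          obtain ⟨h1, h2⟩ := hx
          have : (0:ℝ) < Real.sqrt (1+x) := Real.sqrt_pos.mpr (by linarith)
          positivity)
      (by
        intro x hx
        obtain ⟨h1, h2⟩ := hx
        have hd1 : (1:ℝ) ≤ Real.sqrt (1+x) := by
          nlinarith [Real.sq_sqrt (show (0:ℝ) ≤ 1+x by linarith), Real.sqrt_nonneg (1+x)]
        have hd : (1:ℝ) ≤ (1+x) * Real.sqrt (1+x) := by nlinarith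
        have hS0 : 0 ≤ S x := Finset.sum_nonneg fun i _ => by positivity
        have hS1 : S x ≤ ((D:ℝ) - 1) := by
          calc S x ≤ ∑ i ∈ Finset.range (D-1), (1:ℝ) :=
                Finset.sum_le_sum fun i _ => pow_le_one₀ h1.le h2.le
            _ = ((D-1 : ℕ) : ℝ) := by simp
            _ = (D:ℝ) - 1 := by push_cast [Nat.cast_sub (by omega : 1 ≤ D)]; ring
        have hxp : (0:ℝ) ≤ x ^ (D-1) * (1+x) := by positivity
        have hxp2 : x ^ (D-1) * (1+x) ≤ 2 := by
          have : x ^ (D-1) ≤ 1 := pow_le_one₀ h1.le h2.le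
          nlinarith
        rw [abs_div, abs_of_nonneg (by nlinarith : (0:ℝ) ≤ (1+x) * Real.sqrt (1+x))]
        calc |S x - x ^ (D-1) * (1+x)| / ((1+x) * Real.sqrt (1+x))
            ≤ |S x - x ^ (D-1) * (1+x)| / 1 := by
              apply div_le_div_of_nonneg_left (abs_nonneg _) (by norm_num) hd
          _ = |S x - x ^ (D-1) * (1+x)| := by rw [div_one]
          _ ≤ (D:ℝ) + 1 := by
              rw [abs_sub_le_iff]
              constructor <;> nlinarith)
    apply h.congr_fun _ measurableSet_Ioo
    intro z hz
    obtain ⟨h1, h2⟩ := hz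
    have hz' : z ∈ Ioo (0:ℝ) 1 := ⟨h1, h2⟩
    dsimp only
    rw [Real.rpow_neg (by linarith), ← Real.sqrt_eq_rpow, hf_eq z hz', hM z,
      show (1:ℝ) - z^2 = (1-z) * (1+z) by ring,
      Real.sqrt_mul (by linarith : (0:ℝ) ≤ 1-z)]
    have hs1 : Real.sqrt (1-z) ≠ 0 := Real.sqrt_ne_zero'.mpr (by linarith)
    have hs2 : Real.sqrt (1+z) ≠ 0 := Real.sqrt_ne_zero'.mpr (by linarith)
    have hzne : (1:ℝ) - z ≠ 0 := by linarith
    have hzne2 : (1:ℝ) + z ≠ 0 := by linarith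
    rw [show (1-z) * (1+z) * (Real.sqrt (1-z) * Real.sqrt (1+z))
        = (1-z) * ((1+z) * (Real.sqrt (1-z) * Real.sqrt (1+z))) by ring,
      mul_div_mul_left _ _ hzne]
    field_simp
  -- the antiderivative G and its derivative
  set G : ℝ → ℝ := fun z => (z - z ^ D) * (1 - z^2) ^ (-(1/2) : ℝ) with hG
  have hGderiv : ∀ z ∈ Ioo (0:ℝ) 1,
      HasDerivAt G (f z - ((D:ℝ) - 2) * k z) z := by
    intro z hz
    obtain ⟨h1, h2⟩ := hz
    have ht : (0:ℝ) < 1 - z^2 := by nlinarith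
    have hu : HasDerivAt (fun z : ℝ => z - z ^ D) (1 - (D:ℝ) * z ^ (D-1)) z := by
      simpa using (hasDerivAt_id' z).fun_sub (hasDerivAt_pow D z)
    have hbase : HasDerivAt (fun z : ℝ => 1 - z^2) (0 - 2 * z ^ 1) z :=
      (hasDerivAt_const z (1:ℝ)).sub (hasDerivAt_pow 2 z)
    have hw : HasDerivAt (fun z : ℝ => (1 - z^2) ^ (-(1/2) : ℝ))
        ((0 - 2 * z ^ 1) * (-(1/2)) * (1 - z^2) ^ (-(1/2) - 1 : ℝ)) z :=
      hbase.rpow_const (Or.inl ht.ne')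
    have hd := hu.fun_mul hw
    have e2 : ((-(1/2) : ℝ) - 1) = -(3/2) := by norm_num
    rw [e2] at hd
    refine hd.congr_deriv ?_
    have e1 : (1 - z^2 : ℝ) ^ (-(1/2) : ℝ) = (1 - z^2) * (1 - z^2) ^ (-(3/2) : ℝ) := by
      rw [show (-(1/2) : ℝ) = 1 + -(3/2) by norm_num, Real.rpow_add ht, Real.rpow_one]
    have e3 : f z = (1 - 2 * z ^ (D - 1) + z ^ (D + 1)) * (1 - z^2) ^ (-(3/2) : ℝ) := by
      simp only [hf]
      rw [show (-(3/2) : ℝ) = -(3/2) by norm_num, show ((3:ℝ)/2) = (3/2 : ℝ) by norm_num,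
        Real.rpow_neg ht.le, div_eq_mul_inv]
    have e4 : k z = z ^ (D-1) * ((1 - z^2) * (1 - z^2) ^ (-(3/2) : ℝ)) := by
      simp only [hk]
      rw [← e1, Real.rpow_neg ht.le, ← Real.sqrt_eq_rpow, div_eq_mul_inv]
    rw [e3, e4, e1, hzD z, hzD1 z]
    ring
  -- limits of G
  have hG0 : Filter.Tendsto G (nhdsWithin 0 (Ioi (0:ℝ))) (nhds 0) := by
    have hc : ContinuousAt G 0 := by
      apply ContinuousAt.mul (by fun_prop)
      apply ContinuousAt.rpow_const (by fun_prop)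
      left
      norm_num
    have h0 : G 0 = 0 := by simp [hG, Real.zero_rpow, zero_pow (by omega : D ≠ 0)]
    have ht := hc.tendsto.mono_left (nhdsWithin_le_nhds (s := Ioi (0:ℝ)))
    rwa [h0] at ht
  have hG1 : Filter.Tendsto G (nhdsWithin 1 (Iio (1:ℝ))) (nhds 0) := by
    set Ghat : ℝ → ℝ := fun z => z * S z * (Real.sqrt (1-z) / Real.sqrt (1+z)) with hGhat
    have heq : ∀ z ∈ Ioo (0:ℝ) 1, G z = Ghat z := by
      intro z hz
      obtain ⟨h1, h2⟩ := hz
      have hz' : z ∈ Ioo (0:ℝ) 1 := ⟨h1, h2⟩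
      have ht : (0:ℝ) < 1 - z^2 := by nlinarith
      simp only [hG, hGhat]
      rw [Real.rpow_neg ht.le, ← Real.sqrt_eq_rpow, sqrt_one_sub_sq hz']
      have hs1 : Real.sqrt (1-z) ≠ 0 := Real.sqrt_ne_zero'.mpr (by linarith)
      have hs2 : Real.sqrt (1+z) ≠ 0 := Real.sqrt_ne_zero'.mpr (by linarith)
      have hms : Real.sqrt (1-z) * Real.sqrt (1-z) = 1 - z :=
        Real.mul_self_sqrt (by linarith)
      have hnum : z - z ^ D = z * S z * (1-z) := by
        linear_combination (-z) * hgeom z - hzD z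
      have e5 : Real.sqrt (1-z) / Real.sqrt (1+z)
          = (1-z) / (Real.sqrt (1-z) * Real.sqrt (1+z)) := by
        rw [div_eq_div_iff hs2 (mul_ne_zero hs1 hs2)]
        linear_combination Real.sqrt (1+z) * hms
      rw [e5, hnum]
      ring
    have hcont : ContinuousAt Ghat 1 := by
      apply ContinuousAt.mul
      · apply ContinuousAt.mul continuousAt_id
        exact (continuous_finset_sum _ fun i _ => continuous_pow i).continuousAt
      · apply ContinuousAt.div (by fun_prop) (by fun_prop)
        rw [Real.sqrt_ne_zero']
        norm_num
    have hval : Ghat 1 = 0 := by simp [hGhat]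
    have : Filter.Tendsto Ghat (nhdsWithin 1 (Iio (1:ℝ))) (nhds 0) := by
      rw [← hval]
      exact hcont.continuousWithinAt.tendsto
    apply this.congr'
    filter_upwards [Ioo_mem_nhdsLT_of_mem (show (1:ℝ) ∈ Ioc 0 1 by norm_num)] with z hz
    exact (heq z hz).symm
  -- FTC
  have hk_int := k_integrable D hD
  have hsub_int : IntegrableOn (fun z => f z - ((D:ℝ) - 2) * k z) (Ioo 0 1) :=
    hf_int.sub (hk_int.const_mul _)
  have hII : IntervalIntegrable (fun z => f z - ((D:ℝ) - 2) * k z) volume 0 1 := by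
    rw [intervalIntegrable_iff_integrableOn_Ioc_of_le zero_le_one,
      integrableOn_Ioc_iff_integrableOn_Ioo]
    exact hsub_int
  have hFTC := intervalIntegral.integral_eq_sub_of_hasDerivAt_of_tendsto zero_lt_one
    hGderiv hII hG0 hG1
  rw [intervalIntegral.integral_of_le zero_le_one, integral_Ioc_eq_integral_Ioo] at hFTC
  have hsplit : ∫ z in Ioo (0:ℝ) 1, (f z - ((D:ℝ) - 2) * k z)
      = (∫ z in Ioo (0:ℝ) 1, f z) - ((D:ℝ) - 2) * ∫ z in Ioo (0:ℝ) 1, k z := by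
    rw [integral_sub hf_int (hk_int.const_mul _), integral_const_mul]
  rw [hsplit, sub_zero] at hFTC
  refine ⟨hf_int, ?_⟩
  have hkv := k_value D hD
  have : ∫ z in Ioo (0:ℝ) 1, f z = ((D:ℝ) - 2) * ∫ z in Ioo (0:ℝ) 1, k z := by
    linarith [hFTC]
  rw [this, hkv]
  push_cast
  ring
end

section
/- Fix $r_s > 0$ and $\sigma > 0$. Define, for $R > \sigma$, the Schwarzschild-geodesic time $T_\gamma(R) = 2R + r_s(\ln(4R/r_s) + 1)$ and the lower bound for any curve entering the ball of radius $\sigma$, $T_{\tilde\gamma}(R) = 2(R - \sigma) + 2 r_s \ln(R/\sigma)$. Then for all $R > \frac{4\sigma^2}{r_s} e^{2\sigma/r_s + 1}$ one has $T_\gamma(R) < T_{\tilde\gamma}(R)$. -/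
open Real

theorem schwarzschild_geodesic_beats_near_curve
    (rs σ : ℝ) (hrs : 0 < rs) (hσ : 0 < σ)
    (Tγ Ttilde : ℝ → ℝ)
    (hTγ : ∀ R : ℝ, Tγ R = 2 * R + rs * (Real.log (4 * R / rs) + 1))
    (hTtilde : ∀ R : ℝ, Ttilde R = 2 * (R - σ) + 2 * rs * Real.log (R / σ)) :
    ∀ R : ℝ, R > 4 * σ ^ 2 / rs * Real.exp (2 * σ / rs + 1) → Tγ R < Ttilde R := by
  intro R hR
  have hR0 : 0 < R := lt_trans (by positivity) hR
  have hkey : 2 * σ / rs + 1 < Real.log (R * rs / (4 * σ ^ 2)) := by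
    rw [Real.lt_log_iff_exp_lt (by positivity)]
    rw [lt_div_iff₀ (by positivity)]
    calc Real.exp (2 * σ / rs + 1) * (4 * σ ^ 2)
        = 4 * σ ^ 2 / rs * Real.exp (2 * σ / rs + 1) * rs := by
          field_simp
      _ < R * rs := by
          exact mul_lt_mul_of_pos_right hR hrs
  have h1 : Real.log (R * rs / (4 * σ ^ 2)) =
      Real.log R + Real.log rs - (Real.log 4 + 2 * Real.log σ) := by
    rw [Real.log_div (by positivity) (by positivity), Real.log_mul (ne_of_gt hR0) (ne_of_gt hrs),
      Real.log_mul (by norm_num) (by positivity), Real.log_pow]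
    push_cast; ring
  have h2 : Real.log (R / σ) = Real.log R - Real.log σ :=
    Real.log_div (ne_of_gt hR0) (ne_of_gt hσ)
  have h3 : Real.log (4 * R / rs) = Real.log 4 + Real.log R - Real.log rs := by
    rw [Real.log_div (by positivity) (ne_of_gt hrs), Real.log_mul (by norm_num) (ne_of_gt hR0)]
  rw [hTγ, hTtilde]
  have h4 : rs * (2 * σ / rs) = 2 * σ := by field_simp
  nlinarith [mul_lt_mul_of_pos_left hkey hrs]
end
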